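/- Let d > −1 with d ≠ 0, let p be a probability vector on n ≥ 2 symbols, let j be an index, and let λ be a positive integer. Define lengths l by l_j = λ and l_i = ⌈ −log₂( p_i·(1 − 2^(−λ))/(1 − p_j) ) ⌉ for i ≠ j. Then R^d(p,l) < (1/d)·log₂( p_j^(1+d)·2^(dλ) + (1−p_j)^(1+d)·(2/(1 − 2^(−λ)))^d ) = λ + (1/d)·log₂( p_j^(1+d) + 2^d·(1−p_j)^(1+d)·(2^λ − 1)^(−d) ). -/

import Mathlib

open Real Finset

/-- Exponential redundancy `R^d(p,l)`. -/
noncomputable def expRedundancy (n : ℕ) (d : ℝ) (p : Fin n → ℝ) (l : Fin n → ℕ) : ℝ :=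
  (1 / d) * Real.logb 2 (∑ i, (p i) ^ (1 + d) * (2 : ℝ) ^ (d * (l i : ℝ)))

theorem stmt_8 (n : ℕ) (hn : 2 ≤ n) (d : ℝ) (hd : -1 < d) (hd0 : d ≠ 0)
    (p : Fin n → ℝ) (hp : ∀ i, 0 < p i) (hpsum : ∑ i, p i = 1)
    (j : Fin n) (lam : ℕ) (hlam : 1 ≤ lam)
    (l : Fin n → ℕ)
    (hl : ∀ i, l i = if i = j then lam
      else ⌈-Real.logb 2 (p i * (1 - (2 : ℝ) ^ (-(lam : ℝ))) / (1 - p j))⌉₊) :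
    expRedundancy n d p l < (1 / d) * Real.logb 2
        ((p j) ^ (1 + d) * (2 : ℝ) ^ (d * (lam : ℝ)) +
          (1 - p j) ^ (1 + d) * (2 / (1 - (2 : ℝ) ^ (-(lam : ℝ)))) ^ d) ∧
    (1 / d) * Real.logb 2
        ((p j) ^ (1 + d) * (2 : ℝ) ^ (d * (lam : ℝ)) +
          (1 - p j) ^ (1 + d) * (2 / (1 - (2 : ℝ) ^ (-(lam : ℝ)))) ^ d)
      = (lam : ℝ) + (1 / d) * Real.logb 2
        ((p j) ^ (1 + d) +
          (2 : ℝ) ^ d * (1 - p j) ^ (1 + d) * ((2 : ℝ) ^ (lam : ℝ) - 1) ^ (-d)) := by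
  have hlam0 : (0:ℝ) < (lam:ℝ) := by exact_mod_cast hlam
  set q : ℝ := 1 - (2:ℝ) ^ (-(lam : ℝ)) with hqdef
  have h2l1 : (2:ℝ) ^ (-(lam:ℝ)) < 1 :=
    rpow_lt_one_of_one_lt_of_neg one_lt_two (by linarith)
  have h2lp : (0:ℝ) < (2:ℝ) ^ (-(lam:ℝ)) := rpow_pos_of_pos two_pos _
  have hq : 0 < q := by rw [hqdef]; linarith
  have hq1 : q < 1 := by rw [hqdef]; linarith
  -- erase j facts
  obtain ⟨k, hk⟩ := Fintype.exists_ne_of_one_lt_card (by simp; omega) j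
  have hne : (univ.erase j).Nonempty := ⟨k, Finset.mem_erase.mpr ⟨hk, mem_univ k⟩⟩
  have herase : ∑ i ∈ univ.erase j, p i = 1 - p j := by
    have h := Finset.sum_erase_add univ p (mem_univ j)
    rw [hpsum] at h; linarith
  have hpj1 : 0 < 1 - p j := by
    rw [← herase]; exact Finset.sum_pos (fun i _ => hp i) hne
  -- notation
  set A : Fin n → ℝ := fun i => (p i) ^ (1+d) * (2:ℝ) ^ (d * (l i : ℝ)) with hA
  set B : Fin n → ℝ := fun i => p i * ((1 - p j) ^ d * (2/q) ^ d) with hB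
  -- sum of B over erase j
  have hBsum : ∑ i ∈ univ.erase j, B i = (1 - p j) ^ (1+d) * (2/q) ^ d := by
    rw [hB]
    rw [← Finset.sum_mul, herase]
    rw [rpow_add hpj1, rpow_one]
    ring
  -- per-index comparison
  have hcore : ∀ i ∈ univ.erase j,
      (if 0 < d then A i < B i else B i < A i) := by
    intro i hi
    have hij : i ≠ j := (Finset.mem_erase.mp hi).1
    set c : ℝ := p i * q / (1 - p j) with hc
    have hc0 : 0 < c := by
      apply div_pos (mul_pos (hp i) hq) hpj1
    have hpile : p i ≤ 1 - p j := by
      rw [← herase]; exact Finset.single_le_sum (fun i _ => (hp i).le) hi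
    have hc1 : c ≤ 1 := by
      rw [hc, div_le_one hpj1]
      nlinarith [hp i]
    have hlog0 : 0 ≤ -Real.logb 2 c := by
      have := Real.logb_nonpos one_lt_two hc0.le hc1; linarith
    have hli : (l i : ℝ) < -Real.logb 2 c + 1 := by
      rw [hl i, if_neg hij]
      exact Nat.ceil_lt_add_one hlog0
    have key : (2:ℝ) ^ ((l i : ℝ)) < 2 / c := by
      have h1 : (2:ℝ) ^ ((l i : ℝ)) < (2:ℝ) ^ (-Real.logb 2 c + 1) :=
        rpow_lt_rpow_of_exponent_lt one_lt_two hli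
      have h2 : (2:ℝ) ^ (-Real.logb 2 c + 1) = 2 / c := by
        rw [rpow_add two_pos, rpow_one, rpow_neg (le_of_lt two_pos),
          rpow_logb two_pos (by norm_num) hc0]
        rw [div_eq_mul_inv, mul_comm]
      rw [h2] at h1
      exact h1
    have h2lipos : (0:ℝ) < (2:ℝ) ^ ((l i : ℝ)) := rpow_pos_of_pos two_pos _
    have hrw : (2:ℝ) ^ (d * (l i : ℝ)) = ((2:ℝ) ^ ((l i : ℝ))) ^ d := by
      rw [mul_comm, rpow_mul (le_of_lt two_pos)]
    have halg : (p i) ^ (1+d) * (2 / c) ^ d = B i := by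
      have h2c : 2 / c = ((1 - p j) * (2/q)) * (p i)⁻¹ := by
        rw [hc]; field_simp
      rw [h2c, mul_rpow (mul_nonneg hpj1.le (by positivity)) (inv_nonneg.mpr (hp i).le),
        mul_rpow hpj1.le (by positivity),
        inv_rpow (hp i).le, ← rpow_neg (hp i).le]
      rw [hB]
      have hrr : (p i) ^ (1+d) * ((1 - p j) ^ d * (2/q) ^ d * (p i) ^ (-d))
          = ((p i) ^ (1+d) * (p i) ^ (-d)) * ((1 - p j) ^ d * (2/q) ^ d) := by ring
      rw [hrr, ← rpow_add (hp i)]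
      norm_num
    split_ifs with hdpos
    · -- d > 0
      have h3 : ((2:ℝ) ^ ((l i:ℝ))) ^ d < (2/c) ^ d :=
        rpow_lt_rpow h2lipos.le key hdpos
      calc A i = (p i) ^ (1+d) * ((2:ℝ) ^ ((l i:ℝ))) ^ d := by rw [hA]; simp only; rw [hrw]
        _ < (p i) ^ (1+d) * (2/c) ^ d :=
            mul_lt_mul_of_pos_left h3 (rpow_pos_of_pos (hp i) _)
        _ = B i := halg
    · -- d < 0
      have hdneg : d < 0 := lt_of_le_of_ne (not_lt.mp hdpos) hd0
      have h3 : (2/c) ^ d < ((2:ℝ) ^ ((l i:ℝ))) ^ d :=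
        rpow_lt_rpow_of_neg h2lipos key hdneg
      calc B i = (p i) ^ (1+d) * (2/c) ^ d := halg.symm
        _ < (p i) ^ (1+d) * ((2:ℝ) ^ ((l i:ℝ))) ^ d :=
            mul_lt_mul_of_pos_left h3 (rpow_pos_of_pos (hp i) _)
        _ = A i := by rw [hA]; simp only; rw [hrw]
  -- sums
  have hsplit : ∑ i, A i = (∑ i ∈ univ.erase j, A i) + A j :=
    (Finset.sum_erase_add univ A (mem_univ j)).symm
  have hAj : A j = (p j) ^ (1+d) * (2:ℝ) ^ (d * (lam:ℝ)) := by
    rw [hA]; simp only; rw [hl j, if_pos rfl]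
  set T : ℝ := (p j) ^ (1+d) * (2:ℝ) ^ (d * (lam:ℝ)) + (1 - p j) ^ (1+d) * (2/q) ^ d with hT
  have hS0 : 0 < ∑ i, A i := by
    apply Finset.sum_pos _ ⟨j, mem_univ j⟩
    intro i _
    exact mul_pos (rpow_pos_of_pos (hp i) _) (rpow_pos_of_pos two_pos _)
  have hT0 : 0 < T := by
    apply add_pos
    · exact mul_pos (rpow_pos_of_pos (hp j) _) (rpow_pos_of_pos two_pos _)
    · exact mul_pos (rpow_pos_of_pos hpj1 _) (rpow_pos_of_pos (by positivity) _)
  constructor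
  · -- strict inequality
    show (1/d) * Real.logb 2 (∑ i, A i) < (1/d) * Real.logb 2 T
    rcases lt_or_gt_of_ne hd0 with hdneg | hdpos
    · have hgt : T < ∑ i, A i := by
        have h1 : ∑ i ∈ univ.erase j, B i < ∑ i ∈ univ.erase j, A i := by
          apply Finset.sum_lt_sum_of_nonempty hne
          intro i hi
          have := hcore i hi
          rwa [if_neg (not_lt.mpr hdneg.le)] at this
        rw [hsplit, hAj, hT]
        linarith [hBsum]
      have hlog := Real.logb_lt_logb one_lt_two hT0 hgt
      have h1d : 1/d < 0 := one_div_neg.mpr hdneg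
      exact mul_lt_mul_of_neg_left hlog h1d
    · have hlt : ∑ i, A i < T := by
        have h1 : ∑ i ∈ univ.erase j, A i < ∑ i ∈ univ.erase j, B i := by
          apply Finset.sum_lt_sum_of_nonempty hne
          intro i hi
          have := hcore i hi
          rwa [if_pos hdpos] at this
        rw [hsplit, hAj, hT]
        linarith [hBsum]
      have hlog := Real.logb_lt_logb one_lt_two hS0 hlt
      have h1d : 0 < 1/d := by positivity
      exact mul_lt_mul_of_pos_left hlog h1d
  · -- the equality
    have h2lam1 : (1:ℝ) < (2:ℝ) ^ ((lam:ℝ)) := by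
      have h := rpow_lt_rpow_of_exponent_lt one_lt_two hlam0
      rwa [rpow_zero] at h
    have h2lampos : (0:ℝ) < (2:ℝ) ^ ((lam:ℝ)) := rpow_pos_of_pos two_pos _
    have hsub : (0:ℝ) < (2:ℝ) ^ ((lam:ℝ)) - 1 := by linarith
    have hqeq2 : 2 / q = (2 * (2:ℝ) ^ ((lam:ℝ))) * ((2:ℝ) ^ ((lam:ℝ)) - 1)⁻¹ := by
      have hneg : (2:ℝ) ^ (-(lam:ℝ)) = ((2:ℝ) ^ ((lam:ℝ)))⁻¹ := by
        rw [rpow_neg (le_of_lt two_pos)]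
      rw [hqdef, hneg]
      field_simp
    have h2q : (2/q) ^ d
        = (2:ℝ) ^ (d * (lam:ℝ)) * ((2:ℝ) ^ d * ((2:ℝ) ^ ((lam:ℝ)) - 1) ^ (-d)) := by
      rw [hqeq2, mul_rpow (by positivity) (by positivity),
        mul_rpow (by norm_num) h2lampos.le,
        inv_rpow hsub.le, ← rpow_neg hsub.le]
      rw [show ((2:ℝ) ^ ((lam:ℝ))) ^ d = (2:ℝ) ^ ((lam:ℝ) * d) from
        (rpow_mul (le_of_lt two_pos) _ _).symm]
      rw [mul_comm (lam:ℝ) d]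
      ring
    set X : ℝ := (p j) ^ (1+d) + (2:ℝ) ^ d * (1 - p j) ^ (1+d) * ((2:ℝ) ^ ((lam:ℝ)) - 1) ^ (-d)
      with hX
    have hX0 : 0 < X := by
      apply add_pos (rpow_pos_of_pos (hp j) _)
      exact mul_pos (mul_pos (rpow_pos_of_pos two_pos _) (rpow_pos_of_pos hpj1 _))
        (rpow_pos_of_pos hsub _)
    have hTX : T = (2:ℝ) ^ (d * (lam:ℝ)) * X := by
      rw [hT, hX, h2q]; ring
    show (1/d) * Real.logb 2 T = (lam:ℝ) + (1/d) * Real.logb 2 X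
    rw [hTX, Real.logb_mul (by positivity) (ne_of_gt hX0),
      Real.logb_rpow two_pos (by norm_num)]
    field_simp
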